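/- arXiv:1607.05096 — 3 statements merged into one kernel-verified Lean document; each statement's English description precedes it below -/
import Mathlib

section
/- Let f : ℝ² → ℍ with ∫_{ℝ²} |f(s,t)| ds dt < ∞, let α > 0, and let w(x,y) = (1/(4π²)) e^{−α(x²+y²)}. Then ∫_{ℝ²} 𝓕_T(x,y) w(x,y) dx dy = ∫_{ℝ²} f(s,t) W(s,t) ds dt, where 𝓕_T(x,y) = ∫_{ℝ²} e^{−i x s} f(s,t) e^{−j y t} ds dt is the two-sided quaternion Fourier transform of f and W(s,t) = (1/(4πα)) e^{−(s²+t²)/(4α)} is the Gauss–Weierstrass kernel (which is the two-sided quaternion Fourier transform of w). -/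
open MeasureTheory Filter Real Set
open scoped Quaternion Topology

noncomputable section

def qi : ℍ[ℝ] := ⟨0,1,0,0⟩
def qj : ℍ[ℝ] := ⟨0,0,1,0⟩

/-- `e^{μθ} = cos θ + μ sin θ` for a (pure unit) quaternion `μ`. -/
def qexp (μ : ℍ[ℝ]) (θ : ℝ) : ℍ[ℝ] := (Real.cos θ : ℍ[ℝ]) + Real.sin θ • μ

/-- Two-sided quaternion Fourier transform. -/
def QFT_T (f : ℝ × ℝ → ℍ[ℝ]) (u v : ℝ) : ℍ[ℝ] :=
  ∫ p : ℝ × ℝ, qexp qi (-(u * p.1)) * f p * qexp qj (-(v * p.2))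


/- ### auxiliary real lemmas -/

lemma integrable_gauss_cos {α : ℝ} (hα : 0 < α) (s : ℝ) :
    Integrable (fun x : ℝ => Real.exp (-α * x ^ 2) * Real.cos (s * x)) := by
  refine (integrable_exp_neg_mul_sq hα).mono'
    (Continuous.aestronglyMeasurable (by continuity)) ?_
  filter_upwards with x
  rw [Real.norm_eq_abs, abs_mul, Real.abs_exp]
  calc Real.exp (-α * x ^ 2) * |Real.cos (s * x)|
      ≤ Real.exp (-α * x ^ 2) * 1 := by gcongr; exact Real.abs_cos_le_one _
    _ = Real.exp (-α * x ^ 2) := mul_one _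

lemma integrable_gauss_sin {α : ℝ} (hα : 0 < α) (s : ℝ) :
    Integrable (fun x : ℝ => Real.exp (-α * x ^ 2) * Real.sin (s * x)) := by
  refine (integrable_exp_neg_mul_sq hα).mono'
    (Continuous.aestronglyMeasurable (by continuity)) ?_
  filter_upwards with x
  rw [Real.norm_eq_abs, abs_mul, Real.abs_exp]
  calc Real.exp (-α * x ^ 2) * |Real.sin (s * x)|
      ≤ Real.exp (-α * x ^ 2) * 1 := by gcongr; exact Real.abs_sin_le_one _
    _ = Real.exp (-α * x ^ 2) := mul_one _

lemma gauss_cos_sin {α : ℝ} (hα : 0 < α) (s : ℝ) :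
    (∫ x : ℝ, Real.exp (-α * x ^ 2) * Real.cos (s * x)) =
      Real.sqrt (π / α) * Real.exp (-s ^ 2 / (4 * α)) ∧
    (∫ x : ℝ, Real.exp (-α * x ^ 2) * Real.sin (s * x)) = 0 := by
  have hb : (0:ℝ) < ((α : ℂ)).re := by simpa using hα
  have h := fourierIntegral_gaussian (b := (α : ℂ)) hb (s : ℂ)
  have hint : Integrable (fun x : ℝ =>
      Complex.exp (Complex.I * s * x) * Complex.exp (-(α:ℂ) * x ^ 2)) := by
    have h0 := integrable_cexp_quadratic hb (Complex.I * s) 0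
    refine h0.congr ?_
    filter_upwards with x
    rw [← Complex.exp_add]
    ring_nf
  have heq : ∀ x : ℝ, Complex.exp (Complex.I * s * x) * Complex.exp (-(α:ℂ) * x ^ 2) =
      ((Real.exp (-α * x ^ 2) * Real.cos (s * x) : ℝ) : ℂ) +
      ((Real.exp (-α * x ^ 2) * Real.sin (s * x) : ℝ) : ℂ) * Complex.I := by
    intro x
    rw [show Complex.I * s * x = ((s * x : ℝ) : ℂ) * Complex.I by push_cast; ring,
      Complex.exp_mul_I]
    rw [show (-(α:ℂ) * x ^ 2) = ((-α * x ^ 2 : ℝ) : ℂ) by push_cast; ring,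
      ← Complex.ofReal_exp, ← Complex.ofReal_cos, ← Complex.ofReal_sin]
    push_cast
    ring
  have hre : ∀ x : ℝ,
      (Complex.exp (Complex.I * s * x) * Complex.exp (-(α:ℂ) * x ^ 2)).re =
        Real.exp (-α * x ^ 2) * Real.cos (s * x) ∧
      (Complex.exp (Complex.I * s * x) * Complex.exp (-(α:ℂ) * x ^ 2)).im =
        Real.exp (-α * x ^ 2) * Real.sin (s * x) := by
    intro x
    rw [heq x]
    constructor
    · simp only [Complex.add_re, Complex.ofReal_re, Complex.mul_re, Complex.I_re,
        Complex.I_im, Complex.ofReal_im]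
      ring
    · simp only [Complex.add_im, Complex.ofReal_im, Complex.mul_im, Complex.I_re,
        Complex.I_im, Complex.ofReal_re]
      ring
  have hrhs : ((π : ℂ) / α) ^ (1 / 2 : ℂ) * Complex.exp (-(s:ℂ) ^ 2 / (4 * α)) =
      ((Real.sqrt (π / α) * Real.exp (-s ^ 2 / (4 * α)) : ℝ) : ℂ) := by
    rw [show ((π : ℂ) / α) = ((π / α : ℝ) : ℂ) by push_cast; ring,
      show (-(s:ℂ) ^ 2 / (4 * α)) = ((-s ^ 2 / (4 * α) : ℝ) : ℂ) by push_cast; ring,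
      ← Complex.ofReal_exp, show (1/2 : ℂ) = ((1/2 : ℝ) : ℂ) by norm_num,
      ← Complex.ofReal_cpow (by positivity),
      show ((π / α : ℝ) ^ (1/2 : ℝ)) = Real.sqrt (π / α) from
        (Real.sqrt_eq_rpow _).symm]
    push_cast
    ring
  rw [hrhs] at h
  constructor
  · have h5 := integral_re hint
    simp only [RCLike.re_to_complex] at h5
    rw [integral_congr_ae (Filter.Eventually.of_forall fun x => (hre x).1)] at h5
    rw [h5, h, Complex.ofReal_re]
  · have h5 := integral_im hint
    simp only [RCLike.im_to_complex] at h5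
    rw [integral_congr_ae (Filter.Eventually.of_forall fun x => (hre x).2)] at h5
    rw [h5, h, Complex.ofReal_im]

/- ### quaternion lemmas -/

lemma qexp_neg_eq (μ : ℍ[ℝ]) (x s : ℝ) :
    qexp μ (-(x * s)) =
      (Real.exp 0 : ℝ) • ((Real.cos (s * x) : ℍ[ℝ])) - Real.sin (s * x) • μ := by
  unfold qexp
  rw [Real.cos_neg, Real.sin_neg, mul_comm x s, Real.exp_zero, one_smul,
    neg_smul, sub_eq_add_neg]

lemma norm_qexp_le (μ : ℍ[ℝ]) (θ : ℝ) : ‖qexp μ θ‖ ≤ 1 + ‖μ‖ := by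
  unfold qexp
  calc ‖(Real.cos θ : ℍ[ℝ]) + Real.sin θ • μ‖
      ≤ ‖(Real.cos θ : ℍ[ℝ])‖ + ‖Real.sin θ • μ‖ := norm_add_le _ _
    _ ≤ 1 + ‖μ‖ := by
        gcongr
        · rw [Quaternion.norm_coe, Real.norm_eq_abs]; exact Real.abs_cos_le_one θ
        · rw [norm_smul, Real.norm_eq_abs]
          calc |Real.sin θ| * ‖μ‖ ≤ 1 * ‖μ‖ := by
                gcongr; exact Real.abs_sin_le_one θ
            _ = ‖μ‖ := one_mul _

lemma continuous_qexp (μ : ℍ[ℝ]) : Continuous (qexp μ) := by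
  unfold qexp
  exact (Quaternion.continuous_coe.comp Real.continuous_cos).add
    (Real.continuous_sin.smul continuous_const)

lemma integrable_gauss_qexp {α : ℝ} (hα : 0 < α) (μ : ℍ[ℝ]) (s : ℝ) :
    Integrable (fun x : ℝ => Real.exp (-α * x ^ 2) • qexp μ (-(x * s))) := by
  refine (((integrable_exp_neg_mul_sq hα).const_mul (1 + ‖μ‖)).mono'
    (Continuous.aestronglyMeasurable ?_) ?_)
  · exact (Real.continuous_exp.comp (by continuity)).smul
      ((continuous_qexp μ).comp (by continuity))
  · filter_upwards with x
    rw [norm_smul, Real.norm_eq_abs, Real.abs_exp, mul_comm ((1:ℝ) + ‖μ‖)]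
    gcongr
    exact norm_qexp_le μ _

lemma gauss_qexp {α : ℝ} (hα : 0 < α) (μ : ℍ[ℝ]) (s : ℝ) :
    (∫ x : ℝ, Real.exp (-α * x ^ 2) • qexp μ (-(x * s))) =
      (Real.sqrt (π / α) * Real.exp (-s ^ 2 / (4 * α))) • (1 : ℍ[ℝ]) := by
  have key : ∀ x : ℝ, Real.exp (-α * x ^ 2) • qexp μ (-(x * s)) =
      (Real.exp (-α * x ^ 2) * Real.cos (s * x)) • (1 : ℍ[ℝ]) -
      (Real.exp (-α * x ^ 2) * Real.sin (s * x)) • μ := by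
    intro x
    unfold qexp
    rw [Real.cos_neg, Real.sin_neg, mul_comm x s]
    rw [show ((Real.cos (s * x) : ℝ) : ℍ[ℝ]) = Real.cos (s * x) • (1 : ℍ[ℝ]) by
      rw [← Quaternion.coe_one, Quaternion.smul_coe, mul_one]]
    module
  rw [integral_congr_ae (Filter.Eventually.of_forall key)]
  rw [integral_sub (((integrable_gauss_cos hα s)).smul_const (1 : ℍ[ℝ]))
      (((integrable_gauss_sin hα s)).smul_const μ),
    integral_smul_const, integral_smul_const, (gauss_cos_sin hα s).1,
    (gauss_cos_sin hα s).2, zero_smul, sub_zero]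

lemma cont_gs (α : ℝ) (μ : ℍ[ℝ]) (s : ℝ) :
    Continuous fun x : ℝ => Real.exp (-α * x ^ 2) • qexp μ (-(x * s)) := by
  apply Continuous.fun_smul
  · exact Real.continuous_exp.comp (by continuity)
  · exact (continuous_qexp μ).comp (by continuity)

lemma norm_K_le (f : ℝ × ℝ → ℍ[ℝ]) (p q : ℝ × ℝ) :
    ‖qexp qi (-(p.1 * q.1)) * f q * qexp qj (-(p.2 * q.2))‖ ≤
      ((1 + ‖qi‖) * (1 + ‖qj‖)) * ‖f q‖ := by
  calc ‖qexp qi (-(p.1 * q.1)) * f q * qexp qj (-(p.2 * q.2))‖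
      ≤ ‖qexp qi (-(p.1 * q.1)) * f q‖ * ‖qexp qj (-(p.2 * q.2))‖ := norm_mul_le _ _
    _ ≤ (‖qexp qi (-(p.1 * q.1))‖ * ‖f q‖) * ‖qexp qj (-(p.2 * q.2))‖ := by
        gcongr; exact norm_mul_le _ _
    _ ≤ ((1 + ‖qi‖) * ‖f q‖) * (1 + ‖qj‖) := by
        gcongr <;> first
          | positivity
          | exact norm_qexp_le _ _
    _ = ((1 + ‖qi‖) * (1 + ‖qj‖)) * ‖f q‖ := by ring

/-- The integral of the two-sided QFT against a Gaussian equals the integral of `f`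
against the Gauss–Weierstrass kernel. -/
theorem qft_gauss_weierstrass_duality
    (f : ℝ × ℝ → ℍ[ℝ]) (hf : Integrable f) (α : ℝ) (hα : 0 < α) :
    (∫ p : ℝ × ℝ, QFT_T f p.1 p.2 *
        ((1 / (4 * π ^ 2) * Real.exp (-α * (p.1 ^ 2 + p.2 ^ 2)) : ℝ) : ℍ[ℝ])) =
    ∫ p : ℝ × ℝ, f p *
        ((1 / (4 * π * α) * Real.exp (-(p.1 ^ 2 + p.2 ^ 2) / (4 * α)) : ℝ) : ℍ[ℝ]) := by
  set g : ℝ → ℝ := fun x => Real.exp (-α * x ^ 2) with hg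
  set c : ℝ := 1 / (4 * π ^ 2) with hc
  set K : (ℝ × ℝ) → (ℝ × ℝ) → ℍ[ℝ] := fun p q =>
    qexp qi (-(p.1 * q.1)) * f q * qexp qj (-(p.2 * q.2)) with hK
  have hgsplit : ∀ p : ℝ × ℝ, c * Real.exp (-α * (p.1 ^ 2 + p.2 ^ 2)) =
      c * (g p.1 * g p.2) := by
    intro p
    rw [hg]
    rw [← Real.exp_add]
    ring_nf
  -- measurability of the kernel on the product space
  have hcqi : Continuous fun z : (ℝ × ℝ) × (ℝ × ℝ) => qexp qi (-(z.1.1 * z.2.1)) :=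
    (continuous_qexp qi).comp ((continuous_fst.fst.mul continuous_snd.fst).neg)
  have hcqj : Continuous fun z : (ℝ × ℝ) × (ℝ × ℝ) => qexp qj (-(z.1.2 * z.2.2)) :=
    (continuous_qexp qj).comp ((continuous_fst.snd.mul continuous_snd.snd).neg)
  have hKm : AEStronglyMeasurable (fun z : (ℝ × ℝ) × (ℝ × ℝ) => K z.1 z.2)
      (volume.prod volume) :=
    (hcqi.aestronglyMeasurable.mul hf.1.comp_snd).mul hcqj.aestronglyMeasurable
  -- dominating function
  have hgint : Integrable g := integrable_exp_neg_mul_sq hα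
  have hg2 : Integrable (fun p : ℝ × ℝ => g p.1 * g p.2) := by
    exact (hgint.mul_prod hgint : Integrable _ (volume.prod volume))
  have hg2c : Integrable (fun p : ℝ × ℝ => c * (g p.1 * g p.2)) := hg2.const_mul c
  have hD : Integrable (fun z : (ℝ × ℝ) × (ℝ × ℝ) =>
      (c * (g z.1.1 * g z.1.2)) * (((1 + ‖qi‖) * (1 + ‖qj‖)) * ‖f z.2‖))
      (volume.prod volume) :=
    hg2c.mul_prod (hf.norm.const_mul _)
  have hgpos : ∀ x, 0 ≤ g x := fun x => (Real.exp_pos _).le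
  have hcpos : 0 ≤ c := by rw [hc]; positivity
  have hKint : Integrable (fun z : (ℝ × ℝ) × (ℝ × ℝ) =>
      (c * (g z.1.1 * g z.1.2)) • K z.1 z.2) (volume.prod volume) := by
    refine hD.mono' (AEStronglyMeasurable.fun_smul ?_ hKm) ?_
    · exact (Continuous.aestronglyMeasurable (by fun_prop))
    · filter_upwards with z
      rw [norm_smul, Real.norm_eq_abs,
        abs_of_nonneg (by have := hgpos z.1.1; have := hgpos z.1.2; positivity)]
      gcongr <;> first
        | (have := hgpos z.1.1; have := hgpos z.1.2; positivity)
        | exact norm_K_le f z.1 z.2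
  -- Step 1: rewrite LHS as an iterated integral of a scalar multiple
  have step1 : (∫ p : ℝ × ℝ, QFT_T f p.1 p.2 *
        ((c * Real.exp (-α * (p.1 ^ 2 + p.2 ^ 2)) : ℝ) : ℍ[ℝ])) =
      ∫ p : ℝ × ℝ, ∫ q : ℝ × ℝ, (c * (g p.1 * g p.2)) • K p q := by
    refine integral_congr_ae (Filter.Eventually.of_forall fun p => ?_)
    beta_reduce
    rw [Quaternion.mul_coe_eq_smul, hgsplit p]
    rw [QFT_T, ← integral_smul]
  -- Step 2: Fubini
  have step2 : (∫ p : ℝ × ℝ, ∫ q : ℝ × ℝ, (c * (g p.1 * g p.2)) • K p q) =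
      ∫ q : ℝ × ℝ, ∫ p : ℝ × ℝ, (c * (g p.1 * g p.2)) • K p q :=
    integral_integral_swap hKint
  -- Step 3: inner integral computation
  have step3 : ∀ q : ℝ × ℝ, (∫ p : ℝ × ℝ, (c * (g p.1 * g p.2)) • K p q) =
      f q * ((1 / (4 * π * α) * Real.exp (-(q.1 ^ 2 + q.2 ^ 2) / (4 * α)) : ℝ) : ℍ[ℝ]) := by
    intro q
    obtain ⟨s, t⟩ := q
    set A : ℝ → ℍ[ℝ] := fun x => qexp qi (-(x * s)) with hA
    set B : ℝ → ℍ[ℝ] := fun y => qexp qj (-(y * t)) with hB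
    set a : ℝ → ℝ := fun u => Real.sqrt (π / α) * Real.exp (-u ^ 2 / (4 * α)) with ha
    have hpt : ∀ p : ℝ × ℝ, (c * (g p.1 * g p.2)) • K p (s, t) =
        c • ((g p.1 • A p.1) * f (s, t) * (g p.2 • B p.2)) := by
      intro p
      rw [hK, hA, hB]
      simp only [smul_mul_assoc, mul_smul_comm, smul_smul]
      ring_nf
    have hCint : Integrable (fun p : ℝ × ℝ =>
        (g p.1 • A p.1) * f (s, t) * (g p.2 • B p.2)) (volume.prod volume) := by
      have hDq : Integrable (fun p : ℝ × ℝ =>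
          (g p.1 * g p.2) * (((1 + ‖qi‖) * (1 + ‖qj‖)) * ‖f (s, t)‖))
          (volume.prod volume) := by
        exact hg2.mul_const _
      refine hDq.mono' (Continuous.aestronglyMeasurable ?_) ?_
      · simp only [hg, hA, hB]
        exact (((cont_gs α qi s).comp continuous_fst).mul continuous_const).mul
          ((cont_gs α qj t).comp continuous_snd)
      · filter_upwards with p
        have h1 : ‖(g p.1 • A p.1) * f (s, t) * (g p.2 • B p.2)‖ =
            (g p.1 * g p.2) * ‖K p (s, t)‖ := by
          rw [hK]
          simp only [smul_mul_assoc, mul_smul_comm, smul_smul]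
          rw [norm_smul, Real.norm_eq_abs,
            abs_of_nonneg (by have := hgpos p.1; have := hgpos p.2; positivity)]
          simp only [hA, hB, hK]
          ring
        rw [h1]
        gcongr <;> first
          | (have := hgpos p.1; have := hgpos p.2; positivity)
          | exact norm_K_le f p (s, t)
    have hBint : Integrable (fun y : ℝ => g y • B y) := integrable_gauss_qexp hα qj t
    have hAint : Integrable (fun x : ℝ => g x • A x) := integrable_gauss_qexp hα qi s
    calc (∫ p : ℝ × ℝ, (c * (g p.1 * g p.2)) • K p (s, t))
        = ∫ p : ℝ × ℝ, c • ((g p.1 • A p.1) * f (s, t) * (g p.2 • B p.2)) :=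
          integral_congr_ae (Filter.Eventually.of_forall hpt)
      _ = c • ∫ p : ℝ × ℝ, (g p.1 • A p.1) * f (s, t) * (g p.2 • B p.2) := integral_smul _ _
      _ = c • ∫ x : ℝ, ∫ y : ℝ, (g x • A x) * f (s, t) * (g y • B y) := by
          rw [show (∫ p : ℝ × ℝ, (g p.1 • A p.1) * f (s, t) * (g p.2 • B p.2)) =
            ∫ p : ℝ × ℝ, (g p.1 • A p.1) * f (s, t) * (g p.2 • B p.2) ∂(volume.prod volume) from
              rfl]
          rw [integral_prod _ hCint]
      _ = c • ∫ x : ℝ, (a t) • ((g x • A x) * f (s, t)) := by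
          congr 1
          refine integral_congr_ae (Filter.Eventually.of_forall fun x => ?_)
          beta_reduce
          have h6 := ContinuousLinearMap.integral_comp_comm
            (ContinuousLinearMap.mul ℝ ℍ[ℝ] ((g x • A x) * f (s, t))) hBint
          simp only [ContinuousLinearMap.mul_apply'] at h6
          have h7 : (∫ y : ℝ, g y • B y) = (a t) • (1 : ℍ[ℝ]) := by
            simp only [hg, hB, ha]
            exact gauss_qexp hα qj t
          rw [h6, h7, mul_smul_comm, mul_one]
      _ = c • ((a t) • ((∫ x : ℝ, g x • A x) * f (s, t))) := by
          rw [integral_smul]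
          congr 2
          have h8 := ContinuousLinearMap.integral_comp_comm
            ((ContinuousLinearMap.mul ℝ ℍ[ℝ]).flip (f (s, t))) hAint
          simp only [ContinuousLinearMap.flip_apply, ContinuousLinearMap.mul_apply'] at h8
          rw [← h8]
      _ = (c * (a t * a s)) • f (s, t) := by
          have h9 : (∫ x : ℝ, g x • A x) = (a s) • (1 : ℍ[ℝ]) := by
            simp only [hg, hA, ha]
            exact gauss_qexp hα qi s
          rw [h9, smul_mul_assoc, one_mul, smul_smul, smul_smul, mul_assoc]
      _ = f (s, t) * ((1 / (4 * π * α) * Real.exp (-(s ^ 2 + t ^ 2) / (4 * α)) : ℝ) : ℍ[ℝ]) := by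
          rw [Quaternion.mul_coe_eq_smul]
          congr 1
          rw [ha, hc]
          rw [show Real.sqrt (π / α) * Real.exp (-t ^ 2 / (4 * α)) *
              (Real.sqrt (π / α) * Real.exp (-s ^ 2 / (4 * α))) =
              (Real.sqrt (π / α) * Real.sqrt (π / α)) *
              (Real.exp (-t ^ 2 / (4 * α)) * Real.exp (-s ^ 2 / (4 * α))) by ring,
            Real.mul_self_sqrt (by positivity), ← Real.exp_add]
          rw [show -t ^ 2 / (4 * α) + -s ^ 2 / (4 * α) = -(s ^ 2 + t ^ 2) / (4 * α) by ring]
          field_simp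
  calc (∫ p : ℝ × ℝ, QFT_T f p.1 p.2 *
        ((1 / (4 * π ^ 2) * Real.exp (-α * (p.1 ^ 2 + p.2 ^ 2)) : ℝ) : ℍ[ℝ]))
      = ∫ p : ℝ × ℝ, ∫ q : ℝ × ℝ, (c * (g p.1 * g p.2)) • K p q := step1
    _ = ∫ q : ℝ × ℝ, ∫ p : ℝ × ℝ, (c * (g p.1 * g p.2)) • K p q := step2
    _ = ∫ q : ℝ × ℝ, f q *
        ((1 / (4 * π * α) * Real.exp (-(q.1 ^ 2 + q.2 ^ 2) / (4 * α)) : ℝ) : ℍ[ℝ]) :=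
        integral_congr_ae (Filter.Eventually.of_forall step3)
end
end

section
/- Let f : ℝ² → ℍ with ∫_{ℝ²} |f(s,t)| ds dt < ∞ and write f = f₀ + i f₁ + j f₂ + k f₃ with real components fₙ. For each n = 0,1,2,3 let Fₙ(u,v) = ∫_{ℝ²} fₙ(s,t) e^{−i u s} e^{−i v t} ds dt be the 2D Fourier transform of fₙ. If ∫_{ℝ²} |Fₙ(u,v)| du dv < ∞ for every n = 0,1,2,3, then f(s,t) = (1/(4π²)) ∫_{ℝ²} e^{i s u} 𝓕_T(u,v) e^{j t v} du dv for almost every (s,t) ∈ ℝ², where 𝓕_T is the two-sided quaternion Fourier transform of f. -/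
open MeasureTheory Filter Real Set
open scoped Quaternion Topology FourierTransform RealInnerProductSpace ComplexConjugate ContDiff

noncomputable section

/-- 2D (complex) Fourier transform of a real-valued function. -/
def FT2D (g : ℝ × ℝ → ℝ) (u v : ℝ) : ℂ :=
  ∫ p : ℝ × ℝ, (g p : ℂ) * Complex.exp (-(Complex.I * u * p.1)) *
    Complex.exp (-(Complex.I * v * p.2))

def zp (q : ℍ[ℝ]) : ℂ := ⟨q.re + q.imK, q.imI - q.imJ⟩
def zm (q : ℍ[ℝ]) : ℂ := ⟨q.re - q.imK, q.imI + q.imJ⟩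
def psip (z : ℂ) : ℍ[ℝ] := ⟨z.re/2, z.im/2, -z.im/2, z.re/2⟩
def psim (z : ℂ) : ℍ[ℝ] := ⟨z.re/2, z.im/2, z.im/2, -z.re/2⟩
def cexpI (θ : ℝ) : ℂ := Complex.exp (θ * Complex.I)

@[simp] lemma psip_re (z : ℂ) : (psip z).re = z.re/2 := rfl
@[simp] lemma psip_imI (z : ℂ) : (psip z).imI = z.im/2 := rfl
@[simp] lemma psip_imJ (z : ℂ) : (psip z).imJ = -z.im/2 := rfl
@[simp] lemma psip_imK (z : ℂ) : (psip z).imK = z.re/2 := rfl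
@[simp] lemma psim_re (z : ℂ) : (psim z).re = z.re/2 := rfl
@[simp] lemma psim_imI (z : ℂ) : (psim z).imI = z.im/2 := rfl
@[simp] lemma psim_imJ (z : ℂ) : (psim z).imJ = z.im/2 := rfl
@[simp] lemma psim_imK (z : ℂ) : (psim z).imK = -z.re/2 := rfl
@[simp] lemma qi_re : (qi).re = 0 := rfl
@[simp] lemma qi_imI : (qi).imI = 1 := rfl
@[simp] lemma qi_imJ : (qi).imJ = 0 := rfl
@[simp] lemma qi_imK : (qi).imK = 0 := rfl
@[simp] lemma qj_re : (qj).re = 0 := rfl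
@[simp] lemma qj_imI : (qj).imI = 0 := rfl
@[simp] lemma qj_imJ : (qj).imJ = 1 := rfl
@[simp] lemma qj_imK : (qj).imK = 0 := rfl

lemma cexpI_eq (θ : ℝ) : cexpI θ = ⟨Real.cos θ, Real.sin θ⟩ := by
  rw [cexpI, Complex.exp_mul_I]
  apply Complex.ext <;> simp [Complex.cos_ofReal_re, Complex.sin_ofReal_re]

lemma key (θ φ : ℝ) (q : ℍ[ℝ]) :
    qexp qi θ * q * qexp qj φ
      = psip (cexpI θ * zp q * cexpI (-φ)) + psim (cexpI θ * zm q * cexpI φ) := by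
  ext <;>
    simp [qexp, zp, zm, cexpI_eq, Complex.ext_iff, Real.cos_neg,
      Real.sin_neg, Quaternion.ext_iff] <;>
    ring

lemma zp_decomp (X Y : ℂ) : zp (psip X + psim Y) = X := by
  apply Complex.ext <;> simp [zp] <;> ring

lemma zm_decomp (X Y : ℂ) : zm (psip X + psim Y) = Y := by
  apply Complex.ext <;> simp [zm] <;> ring

lemma psi_zp_zm (q : ℍ[ℝ]) : psip (zp q) + psim (zm q) = q := by
  ext <;> simp [zp, zm] <;> ring

def zpL : ℍ[ℝ] →L[ℝ] ℂ := LinearMap.toContinuousLinearMap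
  { toFun := zp
    map_add' := by intros; apply Complex.ext <;> simp [zp] <;> ring
    map_smul' := by intros; apply Complex.ext <;> simp [zp] <;> ring }

def zmL : ℍ[ℝ] →L[ℝ] ℂ := LinearMap.toContinuousLinearMap
  { toFun := zm
    map_add' := by intros; apply Complex.ext <;> simp [zm] <;> ring
    map_smul' := by intros; apply Complex.ext <;> simp [zm] <;> ring }

def psipL : ℂ →L[ℝ] ℍ[ℝ] := LinearMap.toContinuousLinearMap
  { toFun := psip
    map_add' := by intros; ext <;> simp [] <;> ring
    map_smul' := by intros; ext <;> simp [] <;> ring }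

def psimL : ℂ →L[ℝ] ℍ[ℝ] := LinearMap.toContinuousLinearMap
  { toFun := psim
    map_add' := by intros; ext <;> simp [] <;> ring
    map_smul' := by intros; ext <;> simp [] <;> ring }

@[simp] lemma zpL_apply (q : ℍ[ℝ]) : zpL q = zp q := rfl
@[simp] lemma zmL_apply (q : ℍ[ℝ]) : zmL q = zm q := rfl
@[simp] lemma psipL_apply (z : ℂ) : psipL z = psip z := rfl
@[simp] lemma psimL_apply (z : ℂ) : psimL z = psim z := rfl

lemma cexpI_mul_mul (θ φ : ℝ) (z : ℂ) : cexpI θ * z * cexpI φ = z * cexpI (θ + φ) := by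
  rw [cexpI, cexpI, cexpI, Complex.ofReal_add, add_mul, Complex.exp_add]
  ring

lemma cexpI_norm (θ : ℝ) : ‖cexpI θ‖ = 1 := by
  rw [cexpI, Complex.norm_exp_ofReal_mul_I]

lemma integrable_mul_cexpI {g : ℝ × ℝ → ℂ} (hg : Integrable g) {r : ℝ × ℝ → ℝ}
    (hr : Continuous r) : Integrable fun p => g p * cexpI (r p) := by
  apply hg.norm.mono'
  · exact hg.1.mul ((Complex.continuous_exp.comp
      ((Complex.continuous_ofReal.comp hr).mul continuous_const)).aestronglyMeasurable)
  · refine Eventually.of_forall fun p => ?_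
    rw [norm_mul, cexpI_norm, mul_one]

variable {V : Type*} [NormedAddCommGroup V] [InnerProductSpace ℝ V]
  [MeasurableSpace V] [BorelSpace V] [FiniteDimensional ℝ V]

/-- A smooth compactly supported real function, as a complex-valued Schwartz map. -/
def toSchwartz (g : V → ℝ) (hg : ContDiff ℝ ∞ g) (hsupp : HasCompactSupport g) :
    SchwartzMap V ℂ where
  toFun x := (g x : ℂ)
  smooth' := Complex.ofRealCLM.contDiff.comp hg
  decay' := by
    intro k n
    have hsm : ContDiff ℝ ∞ (fun x => (g x : ℂ)) := Complex.ofRealCLM.contDiff.comp hg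
    have hsupp' : HasCompactSupport (fun x => (g x : ℂ)) := by
      apply hsupp.comp_left (g := fun r : ℝ => (r : ℂ)); simp
    have h1 : HasCompactSupport fun x => ‖x‖ ^ k * ‖iteratedFDeriv ℝ n (fun x => (g x : ℂ)) x‖ := by
      apply ((hsupp'.iteratedFDeriv n).norm).mul_left
    have h2 : Continuous fun x => ‖x‖ ^ k * ‖iteratedFDeriv ℝ n (fun x => (g x : ℂ)) x‖ := by
      exact ((continuous_norm.pow k).mul
        ((hsm.continuous_iteratedFDeriv (by exact_mod_cast le_top)).norm))
    obtain ⟨C, hC⟩ := h1.exists_bound_of_continuous h2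
    exact ⟨C, fun x => (le_abs_self _).trans ((Real.norm_eq_abs _) ▸ hC x)⟩

lemma toSchwartz_apply (g : V → ℝ) (hg : ContDiff ℝ ∞ g) (hsupp : HasCompactSupport g) (x : V) :
    toSchwartz g hg hsupp x = (g x : ℂ) := rfl

theorem ae_fourier_inversion {f : V → ℂ} (hf : Integrable f) (h'f : Integrable (𝓕 f)) :
    ∀ᵐ v, f v = 𝓕⁻ (𝓕 f) v := by
  have mE : MeasurableEmbedding (fun x : V => -x) :=
    (Homeomorph.neg V).measurableEmbedding
  have hnegmp : MeasurePreserving (fun x : V => -x) (volume : Measure V) volume :=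
    Measure.measurePreserving_neg _
  have hFfneg : Integrable (fun x => 𝓕 f (-x)) := hnegmp.integrable_comp_emb mE |>.mpr h'f
  have hcont : Continuous (𝓕⁻ (𝓕 f)) := by
    rw [Real.fourierInv_eq_fourier_comp_neg]
    exact VectorFourier.fourierIntegral_continuous Real.continuous_fourierChar
      continuous_inner hFfneg
  apply ae_eq_of_integral_contDiff_smul_eq hf.locallyIntegrable hcont.locallyIntegrable

  intro g hgsmooth hgsupp
  set gc : V → ℂ := fun x => (g x : ℂ) with hgc
  set φ : SchwartzMap V ℂ := toSchwartz g hgsmooth hgsupp with hφ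
  have hgc_int : Integrable gc := φ.integrable
  have hFgc_int : Integrable (𝓕 gc) := by
    exact (SchwartzMap.fourierTransformCLM ℂ φ).integrable
  have hgc_cont : Continuous gc := Complex.continuous_ofReal.comp hgsmooth.continuous
  have h_inv_gc : 𝓕 (𝓕⁻ gc) = gc := hgc_cont.fourier_fourierInv_eq hgc_int hFgc_int
  have hFinv_gc_int : Integrable (𝓕⁻ gc) := by
    have : Integrable (fun x => 𝓕 gc (-x)) := (hnegmp.integrable_comp_emb mE).mpr hFgc_int
    exact this.congr (Eventually.of_forall fun x =>
      (Real.fourierInv_eq_fourier_neg gc x).symm)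
  have hgcneg_int : Integrable (fun y => gc (-y)) := (hnegmp.integrable_comp_emb mE).mpr hgc_int
  have flip1 : ∫ x, f x • (𝓕 (𝓕⁻ gc)) x = ∫ x, (𝓕 f) x • (𝓕⁻ gc) x := by
    have h := (VectorFourier.integral_fourierIntegral_smul_eq_flip (L := innerₗ V)
      Real.continuous_fourierChar continuous_inner hf hFinv_gc_int).symm
    rw [flip_innerₗ] at h; exact h
  have flip2 : ∫ x, (𝓕 f) x • (𝓕 (fun y => gc (-y))) x
      = ∫ x, (𝓕 (𝓕 f)) x • gc (-x) := by
    have h := (VectorFourier.integral_fourierIntegral_smul_eq_flip (L := innerₗ V)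
      Real.continuous_fourierChar continuous_inner h'f hgcneg_int).symm
    rw [flip_innerₗ] at h; exact h
  calc ∫ x, g x • f x
      = ∫ x, f x • (𝓕 (𝓕⁻ gc)) x := by
        rw [h_inv_gc]; simp only [h_inv_gc, smul_eq_mul, hgc, Complex.real_smul, mul_comm]
    _ = ∫ x, (𝓕 f) x • (𝓕⁻ gc) x := flip1
    _ = ∫ x, (𝓕 f) x • (𝓕 (fun y => gc (-y))) x := by
        rw [← Real.fourierInv_eq_fourier_comp_neg]
    _ = ∫ x, (𝓕 (𝓕 f)) x • gc (-x) := flip2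
    _ = ∫ x, (𝓕 (𝓕 f)) (-x) • gc x := by
        rw [← hnegmp.integral_comp mE (fun y => (𝓕 (𝓕 f) : V → ℂ) y • gc (-y))]
        simp
    _ = ∫ x, g x • 𝓕⁻ (𝓕 f) x := by
        simp only [← Real.fourierInv_eq_fourier_neg, smul_eq_mul,
          Complex.real_smul, mul_comm, hgc]



lemma lemmaA (g : ℝ × ℝ → ℂ) (G : ℝ × ℝ → ℂ) (hg : Integrable g)
    (hGdef : ∀ w : ℝ × ℝ, G w = ∫ p : ℝ × ℝ, g p * cexpI (-(w.1 * p.1 + w.2 * p.2)))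
    (hG : Integrable G) :
    ∀ᵐ p : ℝ × ℝ, ∫ w : ℝ × ℝ, cexpI (p.1 * w.1 + p.2 * w.2) * G w
      = ((4 : ℝ) * π ^ 2) • g p := by
  set e : ℂ ≃ᵐ ℝ × ℝ := Complex.measurableEquivRealProd with he
  have mp : MeasurePreserving e volume volume := Complex.volume_preserving_equiv_real_prod
  have mpe : MeasurableEmbedding e := e.measurableEmbedding
  set g' : ℂ → ℂ := fun z => g (z.re, z.im) with hg'def
  have hg' : Integrable g' := (mp.integrable_comp_emb mpe).mpr hg
  set H : ℂ → ℂ := fun c => G (c.re, c.im) with hHdef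
  have hH : Integrable H := (mp.integrable_comp_emb mpe).mpr hG
  have hinner : ∀ v w : ℂ, (inner ℝ v w : ℝ) = v.re * w.re + v.im * w.im := by
    intro v w
    rw [Complex.inner]
    simp [Complex.mul_re]; ring
  have keyF : ∀ w : ℂ, 𝓕 g' w = H ((2 * π) • w) := by
    intro w
    rw [Real.fourier_eq']
    have : G (2 * π * w.re, 2 * π * w.im)
        = ∫ z : ℂ, g' z * cexpI (-((2 * π * w.re) * z.re + (2 * π * w.im) * z.im)) := by
      rw [hGdef]
      exact (mp.integral_comp mpe _).symm
    have h2 : H ((2 * π) • w) = G (2 * π * w.re, 2 * π * w.im) := by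
      simp [hHdef, Complex.smul_re, Complex.smul_im, smul_eq_mul]
    rw [h2, this]
    congr 1
    ext z
    rw [smul_eq_mul, mul_comm]
    congr 2
    rw [hinner]
    push_cast
    ring
  have hFg'_int : Integrable (𝓕 g') := by
    have := hH.comp_smul (R := 2 * π) (by positivity : (0:ℝ) < 2 * π).ne'
    exact this.congr (Eventually.of_forall fun w => (keyF w).symm)
  have ae1 := ae_fourier_inversion hg' hFg'_int
  have main : ∀ᵐ z : ℂ, ∫ w : ℝ × ℝ, cexpI (z.re * w.1 + z.im * w.2) * G w
      = ((4 : ℝ) * π ^ 2) • g' z := by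
    filter_upwards [ae1] with z hz
    set F : ℂ → ℂ := fun c => cexpI (z.re * c.re + z.im * c.im) * H c with hFdef
    have t1 : ∫ w : ℝ × ℝ, cexpI (z.re * w.1 + z.im * w.2) * G w = ∫ c : ℂ, F c :=
      (mp.integral_comp mpe _).symm
    have t2 : ∫ c : ℂ, F ((2 * π) • c) = |((2 * π) ^ Module.finrank ℝ ℂ)⁻¹| • ∫ c : ℂ, F c :=
      Measure.integral_comp_smul volume F (2 * π)
    have hpt : ∀ c : ℂ, F ((2 * π) • c)
        = Complex.exp (↑(2 * π * (inner ℝ c z : ℝ)) * Complex.I) • 𝓕 g' c := by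
      intro c
      rw [hFdef]
      simp only
      rw [← keyF c, smul_eq_mul]
      congr 1
      rw [cexpI]
      congr 1
      rw [hinner]
      simp only [Complex.smul_re, Complex.smul_im, smul_eq_mul]
      push_cast
      ring
    have t3 : ∫ c : ℂ, F ((2 * π) • c) = 𝓕⁻ (𝓕 g') z := by
      rw [Real.fourierInv_eq']
      exact integral_congr_ae (Eventually.of_forall hpt)
    rw [t1]
    have habs : |((2 * π) ^ Module.finrank ℝ ℂ)⁻¹| = ((4:ℝ) * π ^ 2)⁻¹ := by
      rw [Complex.finrank_real_complex, abs_of_pos (by positivity)]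
      ring_nf
    rw [habs] at t2
    have : ((4:ℝ) * π ^ 2) • ∫ c : ℂ, F ((2*π) • c) = ∫ c : ℂ, F c := by
      rw [t2, smul_smul]
      rw [mul_inv_cancel₀ (by positivity), one_smul]
    rw [← this, t3, ← hz]
  have mps : MeasurePreserving e.symm volume volume := mp.symm e
  have := mps.quasiMeasurePreserving.ae main
  filter_upwards [this] with p hp
  simpa [he, Complex.measurableEquivRealProd_symm_apply, hg'def] using hp


lemma measurePreserving_negSnd :
    MeasurePreserving (fun w : ℝ × ℝ => (w.1, -w.2)) volume volume := by
  have h : MeasurePreserving (Prod.map (id : ℝ → ℝ) (fun x : ℝ => -x))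
      ((volume : Measure ℝ).prod volume) ((volume : Measure ℝ).prod volume) :=
    (MeasurePreserving.id volume).prod (Measure.measurePreserving_neg volume)
  have hv : (volume : Measure (ℝ × ℝ)) = (volume : Measure ℝ).prod volume := by
    rw [Measure.volume_eq_prod]
  rw [hv]
  exact h

lemma measurableEmbedding_negSnd :
    MeasurableEmbedding (fun w : ℝ × ℝ => (w.1, -w.2)) :=
  ((MeasurableEquiv.refl ℝ).prodCongr (Homeomorph.neg ℝ).toMeasurableEquiv).measurableEmbedding

lemma lemmaA_neg (g G : ℝ × ℝ → ℂ) (hg : Integrable g)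
    (hGdef : ∀ w : ℝ × ℝ, G w = ∫ p : ℝ × ℝ, g p * cexpI (-(w.1 * p.1 - w.2 * p.2)))
    (hG : Integrable G) :
    ∀ᵐ p : ℝ × ℝ, ∫ w : ℝ × ℝ, cexpI (p.1 * w.1 - p.2 * w.2) * G w
      = ((4 : ℝ) * π ^ 2) • g p := by
  have hmp := measurePreserving_negSnd
  have hemb := measurableEmbedding_negSnd
  set g' : ℝ × ℝ → ℂ := fun p => g (p.1, -p.2) with hg'def
  have hg' : Integrable g' := (hmp.integrable_comp_emb hemb).mpr hg
  have hGdef' : ∀ w : ℝ × ℝ, G w = ∫ p : ℝ × ℝ, g' p * cexpI (-(w.1 * p.1 + w.2 * p.2)) := by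
    intro w
    rw [hGdef w,
      ← hmp.integral_comp hemb (fun p => g p * cexpI (-(w.1 * p.1 - w.2 * p.2)))]
    congr 1
    ext p
    show g (p.1, -p.2) * cexpI (-(w.1 * p.1 - w.2 * -p.2))
      = g (p.1, -p.2) * cexpI (-(w.1 * p.1 + w.2 * p.2))
    congr 2
    ring
  have h1 := lemmaA g' G hg' hGdef' hG
  have h2 := hmp.quasiMeasurePreserving.ae h1
  filter_upwards [h2] with p hp
  simp only [hg'def, neg_neg, Prod.mk.eta] at hp
  rw [← hp]
  congr 1
  ext w
  congr 2
  ring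

lemma FT2D_eq_integral_cexpI (g : ℝ × ℝ → ℝ) (u v : ℝ) :
    FT2D g u v = ∫ p : ℝ × ℝ, (g p : ℂ) * cexpI (-(u * p.1 + v * p.2)) := by
  rw [FT2D]
  congr 1
  ext p
  rw [mul_assoc, ← Complex.exp_add, cexpI]
  congr 1
  push_cast
  ring


/-- If the 2D Fourier transforms of all four real components of `f` are integrable,
then `f` is recovered a.e. from its two-sided QFT. -/
theorem qft_two_sided_inversion_of_component_FT_integrable
    (f : ℝ × ℝ → ℍ[ℝ]) (hf : Integrable f)
    (hF0 : Integrable (fun p : ℝ × ℝ => FT2D (fun q => (f q).re) p.1 p.2))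
    (hF1 : Integrable (fun p : ℝ × ℝ => FT2D (fun q => (f q).imI) p.1 p.2))
    (hF2 : Integrable (fun p : ℝ × ℝ => FT2D (fun q => (f q).imJ) p.1 p.2))
    (hF3 : Integrable (fun p : ℝ × ℝ => FT2D (fun q => (f q).imK) p.1 p.2)) :
    ∀ᵐ p : ℝ × ℝ, f p =
      (1 / (4 * π ^ 2)) • ∫ q : ℝ × ℝ, qexp qi (p.1 * q.1) * QFT_T f q.1 q.2 * qexp qj (p.2 * q.2) := by
  have hap_int : Integrable (fun p => zp (f p)) := zpL.integrable_comp hf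
  have ham_int : Integrable (fun p => zm (f p)) := zmL.integrable_comp hf
  -- integrability of the four (complex-valued) components
  have h0r : Integrable (fun p => (f p).re) := by
    have h := ((Complex.reCLM.integrable_comp hap_int).add
      (Complex.reCLM.integrable_comp ham_int)).div_const 2
    apply h.congr
    refine Eventually.of_forall fun p => ?_
    simp [zp, zm]
  have h1r : Integrable (fun p => (f p).imI) := by
    have h := ((Complex.imCLM.integrable_comp hap_int).add
      (Complex.imCLM.integrable_comp ham_int)).div_const 2
    apply h.congr
    refine Eventually.of_forall fun p => ?_
    simp [zp, zm]
  have h2r : Integrable (fun p => (f p).imJ) := by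
    have h := ((Complex.imCLM.integrable_comp ham_int).sub
      (Complex.imCLM.integrable_comp hap_int)).div_const 2
    apply h.congr
    refine Eventually.of_forall fun p => ?_
    simp [zp, zm]
  have h3r : Integrable (fun p => (f p).imK) := by
    have h := ((Complex.reCLM.integrable_comp hap_int).sub
      (Complex.reCLM.integrable_comp ham_int)).div_const 2
    apply h.congr
    refine Eventually.of_forall fun p => ?_
    simp [zp, zm]
  have h0c : Integrable (fun p => ((f p).re : ℂ)) := Complex.ofRealCLM.integrable_comp h0r
  have h1c : Integrable (fun p => ((f p).imI : ℂ)) := Complex.ofRealCLM.integrable_comp h1r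
  have h2c : Integrable (fun p => ((f p).imJ : ℂ)) := Complex.ofRealCLM.integrable_comp h2r
  have h3c : Integrable (fun p => ((f p).imK : ℂ)) := Complex.ofRealCLM.integrable_comp h3r
  set Gm : ℝ × ℝ → ℂ := fun w => ∫ p : ℝ × ℝ, zm (f p) * cexpI (-(w.1 * p.1 + w.2 * p.2))
    with hGmdef
  set Gp : ℝ × ℝ → ℂ := fun w => ∫ p : ℝ × ℝ, zp (f p) * cexpI (-(w.1 * p.1 - w.2 * p.2))
    with hGpdef
  have hkercont : ∀ u v : ℝ, Continuous (fun p : ℝ × ℝ => -(u * p.1 + v * p.2)) := by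
    intro u v; fun_prop
  -- splitting of Gm in terms of FT2D of the components
  have hGm_split : ∀ w : ℝ × ℝ, Gm w =
      FT2D (fun q => (f q).re) w.1 w.2 - FT2D (fun q => (f q).imK) w.1 w.2
        + Complex.I * (FT2D (fun q => (f q).imI) w.1 w.2 + FT2D (fun q => (f q).imJ) w.1 w.2) := by
    intro w
    have hpt : ∀ p : ℝ × ℝ, zm (f p) * cexpI (-(w.1 * p.1 + w.2 * p.2)) =
        (((f p).re : ℂ) * cexpI (-(w.1 * p.1 + w.2 * p.2))
          - ((f p).imK : ℂ) * cexpI (-(w.1 * p.1 + w.2 * p.2)))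
        + Complex.I * (((f p).imI : ℂ) * cexpI (-(w.1 * p.1 + w.2 * p.2))
          + ((f p).imJ : ℂ) * cexpI (-(w.1 * p.1 + w.2 * p.2))) := by
      intro p
      have : zm (f p) = (((f p).re : ℂ) - ((f p).imK : ℂ))
          + Complex.I * (((f p).imI : ℂ) + ((f p).imJ : ℂ)) := by
        apply Complex.ext <;> simp [zm]
      rw [this]
      ring
    have iA : Integrable (fun p : ℝ × ℝ => ((f p).re : ℂ) * cexpI (-(w.1 * p.1 + w.2 * p.2))) :=
      integrable_mul_cexpI h0c (hkercont w.1 w.2)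
    have iB : Integrable (fun p : ℝ × ℝ => ((f p).imK : ℂ) * cexpI (-(w.1 * p.1 + w.2 * p.2))) :=
      integrable_mul_cexpI h3c (hkercont w.1 w.2)
    have iC : Integrable (fun p : ℝ × ℝ => ((f p).imI : ℂ) * cexpI (-(w.1 * p.1 + w.2 * p.2))) :=
      integrable_mul_cexpI h1c (hkercont w.1 w.2)
    have iD : Integrable (fun p : ℝ × ℝ => ((f p).imJ : ℂ) * cexpI (-(w.1 * p.1 + w.2 * p.2))) :=
      integrable_mul_cexpI h2c (hkercont w.1 w.2)
    have iAB : Integrable (fun p : ℝ × ℝ => ((f p).re : ℂ) * cexpI (-(w.1 * p.1 + w.2 * p.2))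
        - ((f p).imK : ℂ) * cexpI (-(w.1 * p.1 + w.2 * p.2))) := iA.sub iB
    have iICD : Integrable (fun p : ℝ × ℝ => Complex.I *
        (((f p).imI : ℂ) * cexpI (-(w.1 * p.1 + w.2 * p.2))
          + ((f p).imJ : ℂ) * cexpI (-(w.1 * p.1 + w.2 * p.2)))) := (iC.add iD).const_mul _
    rw [hGmdef]
    simp only
    rw [integral_congr_ae (Eventually.of_forall hpt), integral_add iAB iICD,
      integral_sub iA iB, integral_const_mul, integral_add iC iD,
      FT2D_eq_integral_cexpI, FT2D_eq_integral_cexpI, FT2D_eq_integral_cexpI,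
      FT2D_eq_integral_cexpI]
  have hGm_int : Integrable Gm := by
    have h := ((hF0.sub hF3).add ((hF1.add hF2).const_mul Complex.I))
    exact h.congr (Eventually.of_forall fun w => (hGm_split w).symm)
  -- splitting of Gp
  have hGp_split : ∀ w : ℝ × ℝ, Gp w =
      FT2D (fun q => (f q).re) w.1 (-w.2) + FT2D (fun q => (f q).imK) w.1 (-w.2)
        + Complex.I * (FT2D (fun q => (f q).imI) w.1 (-w.2)
          - FT2D (fun q => (f q).imJ) w.1 (-w.2)) := by
    intro w
    have hpt : ∀ p : ℝ × ℝ, zp (f p) * cexpI (-(w.1 * p.1 - w.2 * p.2)) =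
        (((f p).re : ℂ) * cexpI (-(w.1 * p.1 + (-w.2) * p.2))
          + ((f p).imK : ℂ) * cexpI (-(w.1 * p.1 + (-w.2) * p.2)))
        + Complex.I * (((f p).imI : ℂ) * cexpI (-(w.1 * p.1 + (-w.2) * p.2))
          - ((f p).imJ : ℂ) * cexpI (-(w.1 * p.1 + (-w.2) * p.2))) := by
      intro p
      have h1 : zp (f p) = (((f p).re : ℂ) + ((f p).imK : ℂ))
          + Complex.I * (((f p).imI : ℂ) - ((f p).imJ : ℂ)) := by
        apply Complex.ext <;> simp [zp]
      have h2 : -(w.1 * p.1 - w.2 * p.2) = -(w.1 * p.1 + (-w.2) * p.2) := by ring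
      rw [h1, h2]
      ring
    have iA : Integrable (fun p : ℝ × ℝ => ((f p).re : ℂ) * cexpI (-(w.1 * p.1 + -w.2 * p.2))) :=
      integrable_mul_cexpI h0c (hkercont w.1 (-w.2))
    have iB : Integrable (fun p : ℝ × ℝ => ((f p).imK : ℂ) * cexpI (-(w.1 * p.1 + -w.2 * p.2))) :=
      integrable_mul_cexpI h3c (hkercont w.1 (-w.2))
    have iC : Integrable (fun p : ℝ × ℝ => ((f p).imI : ℂ) * cexpI (-(w.1 * p.1 + -w.2 * p.2))) :=
      integrable_mul_cexpI h1c (hkercont w.1 (-w.2))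
    have iD : Integrable (fun p : ℝ × ℝ => ((f p).imJ : ℂ) * cexpI (-(w.1 * p.1 + -w.2 * p.2))) :=
      integrable_mul_cexpI h2c (hkercont w.1 (-w.2))
    have iAB : Integrable (fun p : ℝ × ℝ => ((f p).re : ℂ) * cexpI (-(w.1 * p.1 + -w.2 * p.2))
        + ((f p).imK : ℂ) * cexpI (-(w.1 * p.1 + -w.2 * p.2))) := iA.add iB
    have iICD : Integrable (fun p : ℝ × ℝ => Complex.I *
        (((f p).imI : ℂ) * cexpI (-(w.1 * p.1 + -w.2 * p.2))
          - ((f p).imJ : ℂ) * cexpI (-(w.1 * p.1 + -w.2 * p.2)))) := (iC.sub iD).const_mul _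
    rw [hGpdef]
    simp only
    rw [integral_congr_ae (Eventually.of_forall hpt), integral_add iAB iICD,
      integral_add iA iB, integral_const_mul, integral_sub iC iD,
      FT2D_eq_integral_cexpI, FT2D_eq_integral_cexpI, FT2D_eq_integral_cexpI,
      FT2D_eq_integral_cexpI]
  have hGp_int : Integrable Gp := by
    have hcomb : Integrable (fun w : ℝ × ℝ =>
        FT2D (fun q => (f q).re) w.1 w.2 + FT2D (fun q => (f q).imK) w.1 w.2
          + Complex.I * (FT2D (fun q => (f q).imI) w.1 w.2
            - FT2D (fun q => (f q).imJ) w.1 w.2)) :=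
      (hF0.add hF3).add ((hF1.sub hF2).const_mul Complex.I)
    have h := (measurePreserving_negSnd.integrable_comp_emb measurableEmbedding_negSnd).mpr hcomb
    exact h.congr (Eventually.of_forall fun w => (hGp_split w).symm)
  -- the QFT in terms of Gp and Gm
  have hcontker2 : ∀ u v : ℝ, Continuous (fun p : ℝ × ℝ => -(u * p.1 - v * p.2)) := by
    intro u v; fun_prop
  have hQFT : ∀ u v : ℝ, QFT_T f u v = psip (Gp (u, v)) + psim (Gm (u, v)) := by
    intro u v
    have hpt : ∀ p : ℝ × ℝ, qexp qi (-(u * p.1)) * f p * qexp qj (-(v * p.2))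
        = psipL (zp (f p) * cexpI (-(u * p.1 - v * p.2)))
          + psimL (zm (f p) * cexpI (-(u * p.1 + v * p.2))) := by
      intro p
      rw [key]
      simp only [psipL_apply, psimL_apply, neg_neg]
      rw [cexpI_mul_mul, cexpI_mul_mul]
      have e1 : -(u * p.1) + v * p.2 = -(u * p.1 - v * p.2) := by ring
      have e2 : -(u * p.1) + -(v * p.2) = -(u * p.1 + v * p.2) := by ring
      rw [e1, e2]
    have hip : Integrable (fun p => zp (f p) * cexpI (-(u * p.1 - v * p.2))) :=
      integrable_mul_cexpI hap_int (hcontker2 u v)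
    have him : Integrable (fun p => zm (f p) * cexpI (-(u * p.1 + v * p.2))) :=
      integrable_mul_cexpI ham_int (hkercont u v)
    rw [QFT_T, integral_congr_ae (Eventually.of_forall hpt),
      integral_add (psipL.integrable_comp hip) (psimL.integrable_comp him),
      psipL.integral_comp_comm hip, psimL.integral_comp_comm him]
    simp only [psipL_apply, psimL_apply]; rfl
  -- inversion for the two complex pieces
  have aem := lemmaA (fun p => zm (f p)) Gm ham_int (fun w => rfl) hGm_int
  have aep := lemmaA_neg (fun p => zp (f p)) Gp hap_int (fun w => rfl) hGp_int
  filter_upwards [aem, aep] with p hpm hpp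
  have hpt2 : ∀ q : ℝ × ℝ, qexp qi (p.1 * q.1) * QFT_T f q.1 q.2 * qexp qj (p.2 * q.2)
      = psipL (cexpI (p.1 * q.1 - p.2 * q.2) * Gp q)
        + psimL (cexpI (p.1 * q.1 + p.2 * q.2) * Gm q) := by
    intro q
    rw [hQFT q.1 q.2, key, zp_decomp, zm_decomp]
    simp only [psipL_apply, psimL_apply]
    rw [cexpI_mul_mul, cexpI_mul_mul]
    have e1 : p.1 * q.1 + -(p.2 * q.2) = p.1 * q.1 - p.2 * q.2 := by ring
    rw [e1, mul_comm (Gp (q.1, q.2)), mul_comm (Gm (q.1, q.2))]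
  have hip2 : Integrable (fun q : ℝ × ℝ => cexpI (p.1 * q.1 - p.2 * q.2) * Gp q) := by
    have h := integrable_mul_cexpI hGp_int (by fun_prop :
      Continuous (fun q : ℝ × ℝ => p.1 * q.1 - p.2 * q.2))
    exact h.congr (Eventually.of_forall fun q => mul_comm _ _)
  have him2 : Integrable (fun q : ℝ × ℝ => cexpI (p.1 * q.1 + p.2 * q.2) * Gm q) := by
    have h := integrable_mul_cexpI hGm_int (by fun_prop :
      Continuous (fun q : ℝ × ℝ => p.1 * q.1 + p.2 * q.2))
    exact h.congr (Eventually.of_forall fun q => mul_comm _ _)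
  have hint : ∫ q : ℝ × ℝ, qexp qi (p.1 * q.1) * QFT_T f q.1 q.2 * qexp qj (p.2 * q.2)
      = ((4 : ℝ) * π ^ 2) • f p := by
    rw [integral_congr_ae (Eventually.of_forall hpt2),
      integral_add (psipL.integrable_comp hip2) (psimL.integrable_comp him2),
      psipL.integral_comp_comm hip2, psimL.integral_comp_comm him2, hpp, hpm,
      _root_.map_smul, _root_.map_smul, ← smul_add]
    simp only [psipL_apply, psimL_apply]
    rw [psi_zp_zm]
  rw [hint, smul_smul]
  have hπ : (1 / (4 * π ^ 2)) * ((4 : ℝ) * π ^ 2) = 1 := by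
    rw [one_div, inv_mul_cancel₀]
    positivity
  rw [hπ, one_smul]
end
end

section
/- Let m, n ≥ 0 and let f : ℝ² → ℍ be integrable and have partial derivatives in the L¹ norm of all orders ≤ m+n, with g = ∂^{m+n} f / (∂s^m ∂t^n) denoting the iterated L¹-norm partial derivative (m times in the first variable and n times in the second). Then the two-sided quaternion Fourier transforms satisfy 𝓖_T(u,v) = (i u)^m 𝓕_T(u,v) (j v)^n for all (u,v) ∈ ℝ². -/
open MeasureTheory Filter Real Set
open scoped Quaternion Topology

noncomputable section

/-- `g` is the partial derivative of `f` with respect to the first variable in the `L¹` norm. -/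
def L1PartialDerivS (f g : ℝ × ℝ → ℍ[ℝ]) : Prop :=
  Tendsto (fun h : ℝ => ∫ p : ℝ × ℝ, ‖h⁻¹ • (f (p.1 + h, p.2) - f p) - g p‖)
    (𝓝[≠] (0:ℝ)) (𝓝 0)

/-- `g` is the partial derivative of `f` with respect to the second variable in the `L¹` norm. -/
def L1PartialDerivT (f g : ℝ × ℝ → ℍ[ℝ]) : Prop :=
  Tendsto (fun h : ℝ => ∫ p : ℝ × ℝ, ‖h⁻¹ • (f (p.1, p.2 + h) - f p) - g p‖)
    (𝓝[≠] (0:ℝ)) (𝓝 0)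

/-- `D` is a family of iterated `L¹`-norm partial derivatives of `f` of all total
orders `≤ N`, with `D k l` the derivative taken `k` times in `s` and `l` times in `t`. -/
def HasL1DerivsUpTo (N : ℕ) (f : ℝ × ℝ → ℍ[ℝ]) (D : ℕ → ℕ → (ℝ × ℝ → ℍ[ℝ])) : Prop :=
  D 0 0 = f ∧
  (∀ k l : ℕ, k + l ≤ N → Integrable (D k l)) ∧
  (∀ k l : ℕ, k + 1 + l ≤ N → L1PartialDerivS (D k l) (D (k + 1) l)) ∧
  (∀ k l : ℕ, k + l + 1 ≤ N → L1PartialDerivT (D k l) (D k (l + 1)))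

/-! ### Auxiliary lemmas -/

lemma qexp_qi (θ : ℝ) : qexp qi θ = ⟨Real.cos θ, Real.sin θ, 0, 0⟩ := by
  ext <;> simp [qexp] <;> simp [qi]

lemma qexp_qj (θ : ℝ) : qexp qj θ = ⟨Real.cos θ, 0, Real.sin θ, 0⟩ := by
  ext <;> simp [qexp] <;> simp [qj]

lemma norm_qexp_qi (θ : ℝ) : ‖qexp qi θ‖ = 1 := by
  have h : ‖qexp qi θ‖ * ‖qexp qi θ‖ = 1 := by
    rw [← Quaternion.normSq_eq_norm_mul_self, Quaternion.normSq_def', qexp_qi]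
    simpa using cos_sq_add_sin_sq θ
  have h2 := norm_nonneg (qexp qi θ)
  rcases mul_self_eq_one_iff.mp h with h1 | h1 <;> linarith

lemma norm_qexp_qj (θ : ℝ) : ‖qexp qj θ‖ = 1 := by
  have h : ‖qexp qj θ‖ * ‖qexp qj θ‖ = 1 := by
    rw [← Quaternion.normSq_eq_norm_mul_self, Quaternion.normSq_def', qexp_qj]
    simpa using cos_sq_add_sin_sq θ
  have h2 := norm_nonneg (qexp qj θ)
  rcases mul_self_eq_one_iff.mp h with h1 | h1 <;> linarith

lemma qexp_qi_add (a b : ℝ) : qexp qi (a + b) = qexp qi a * qexp qi b := by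
  ext <;> simp only [Quaternion.re_mul, Quaternion.imI_mul, Quaternion.imJ_mul, Quaternion.imK_mul] <;>
    simp [qexp_qi,
      Real.cos_add, Real.sin_add] <;> ring

lemma qexp_qj_add (a b : ℝ) : qexp qj (a + b) = qexp qj a * qexp qj b := by
  ext <;> simp only [Quaternion.re_mul, Quaternion.imI_mul, Quaternion.imJ_mul, Quaternion.imK_mul] <;>
    simp [qexp_qj,
      Real.cos_add, Real.sin_add] <;> ring

lemma qexp_smul_one (μ : ℍ[ℝ]) (θ : ℝ) :
    qexp μ θ = Real.cos θ • (1 : ℍ[ℝ]) + Real.sin θ • μ := by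
  rw [qexp]
  congr 1
  ext <;> simp

lemma tendsto_qexp_slope (μ : ℍ[ℝ]) (u : ℝ) :
    Tendsto (fun h : ℝ => h⁻¹ • (qexp μ (u * h) - 1)) (𝓝[≠] (0:ℝ)) (𝓝 (u • μ)) := by
  have hd : HasDerivAt (fun θ : ℝ => qexp μ (u * θ)) (u • μ) 0 := by
    simp_rw [qexp_smul_one]
    have hc : HasDerivAt (fun θ : ℝ => Real.cos (u * θ)) 0 0 := by
      have := ((Real.hasDerivAt_cos (u * 0)).comp 0 ((hasDerivAt_id 0).const_mul u))
      exact this.congr_deriv (by simp)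
    have hs : HasDerivAt (fun θ : ℝ => Real.sin (u * θ)) u 0 := by
      have := ((Real.hasDerivAt_sin (u * 0)).comp 0 ((hasDerivAt_id 0).const_mul u))
      exact this.congr_deriv (by simp)
    exact ((hc.smul_const (1 : ℍ[ℝ])).add (hs.smul_const μ)).congr_deriv (by simp)
  have := hasDerivAt_iff_tendsto_slope.mp hd
  refine this.congr (fun h => ?_)
  simp [slope, qexp, sub_zero, vsub_eq_sub]

lemma integrable_kernel (u v : ℝ) (F : ℝ × ℝ → ℍ[ℝ]) (hF : Integrable F) :
    Integrable (fun p : ℝ × ℝ => qexp qi (-(u * p.1)) * F p * qexp qj (-(v * p.2))) := by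
  have hc1 : Continuous fun p : ℝ × ℝ => qexp qi (-(u * p.1)) :=
    (continuous_qexp qi).comp ((continuous_const.mul continuous_fst).neg)
  have hc2 : Continuous fun p : ℝ × ℝ => qexp qj (-(v * p.2)) :=
    (continuous_qexp qj).comp ((continuous_const.mul continuous_snd).neg)
  have hm : AEStronglyMeasurable
      (fun p : ℝ × ℝ => qexp qi (-(u * p.1)) * F p * qexp qj (-(v * p.2))) volume :=
    (hc1.aestronglyMeasurable.mul hF.1).mul hc2.aestronglyMeasurable
  refine hF.norm.mono' hm (Filter.Eventually.of_forall fun p => ?_)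
  simp [norm_mul, norm_qexp_qi, norm_qexp_qj]

lemma norm_qft_le (u v : ℝ) (F : ℝ × ℝ → ℍ[ℝ]) :
    ‖QFT_T F u v‖ ≤ ∫ p : ℝ × ℝ, ‖F p‖ := by
  refine le_trans (norm_integral_le_integral_norm _) (le_of_eq ?_)
  congr 1
  funext p
  simp [norm_mul, norm_qexp_qi, norm_qexp_qj]

lemma integrable_shift_S (F : ℝ × ℝ → ℍ[ℝ]) (hF : Integrable F) (h : ℝ) :
    Integrable (fun p : ℝ × ℝ => F (p.1 + h, p.2)) := by
  have := hF.comp_add_right ((h, 0) : ℝ × ℝ)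
  refine this.congr (Filter.Eventually.of_forall fun p => ?_)
  have hp : p + ((h, 0) : ℝ × ℝ) = (p.1 + h, p.2) := by ext <;> simp
  show F (p + ((h, 0) : ℝ × ℝ)) = F (p.1 + h, p.2)
  rw [hp]

lemma integrable_shift_T (F : ℝ × ℝ → ℍ[ℝ]) (hF : Integrable F) (h : ℝ) :
    Integrable (fun p : ℝ × ℝ => F (p.1, p.2 + h)) := by
  have := hF.comp_add_right ((0, h) : ℝ × ℝ)
  refine this.congr (Filter.Eventually.of_forall fun p => ?_)
  have hp : p + ((0, h) : ℝ × ℝ) = (p.1, p.2 + h) := by ext <;> simp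
  show F (p + ((0, h) : ℝ × ℝ)) = F (p.1, p.2 + h)
  rw [hp]

lemma qft_shift_S (F : ℝ × ℝ → ℍ[ℝ]) (hF : Integrable F) (u v h : ℝ) :
    ∫ p : ℝ × ℝ, qexp qi (-(u * p.1)) * F (p.1 + h, p.2) * qexp qj (-(v * p.2))
      = qexp qi (u * h) * QFT_T F u v := by
  have key : ∀ p : ℝ × ℝ,
      qexp qi (-(u * p.1)) * F (p.1 + h, p.2) * qexp qj (-(v * p.2))
        = (fun q : ℝ × ℝ => qexp qi (u * h) *
            (qexp qi (-(u * q.1)) * F q * qexp qj (-(v * q.2)))) (p + (h, 0)) := by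
    intro p
    have hp : p + ((h, 0) : ℝ × ℝ) = (p.1 + h, p.2) := by ext <;> simp
    simp only [hp]
    have : qexp qi (u * h) * qexp qi (-(u * (p.1 + h))) = qexp qi (-(u * p.1)) := by
      rw [← qexp_qi_add]; ring_nf
    rw [← mul_assoc, ← mul_assoc, this]
  rw [integral_congr_ae (Filter.Eventually.of_forall key)]
  rw [integral_add_right_eq_self (fun q : ℝ × ℝ => qexp qi (u * h) *
      (qexp qi (-(u * q.1)) * F q * qexp qj (-(v * q.2)))) ((h, 0) : ℝ × ℝ)]
  have := (ContinuousLinearMap.mul ℝ ℍ[ℝ] (qexp qi (u * h))).integral_comp_comm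
    (integrable_kernel u v F hF)
  simpa [QFT_T, ContinuousLinearMap.mul_apply'] using this

lemma qft_shift_T (F : ℝ × ℝ → ℍ[ℝ]) (hF : Integrable F) (u v h : ℝ) :
    ∫ p : ℝ × ℝ, qexp qi (-(u * p.1)) * F (p.1, p.2 + h) * qexp qj (-(v * p.2))
      = QFT_T F u v * qexp qj (v * h) := by
  have key : ∀ p : ℝ × ℝ,
      qexp qi (-(u * p.1)) * F (p.1, p.2 + h) * qexp qj (-(v * p.2))
        = (fun q : ℝ × ℝ => (qexp qi (-(u * q.1)) * F q * qexp qj (-(v * q.2))) *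
            qexp qj (v * h)) (p + (0, h)) := by
    intro p
    have hp : p + ((0, h) : ℝ × ℝ) = (p.1, p.2 + h) := by ext <;> simp
    simp only [hp]
    have : qexp qj (-(v * (p.2 + h))) * qexp qj (v * h) = qexp qj (-(v * p.2)) := by
      rw [← qexp_qj_add]; ring_nf
    rw [mul_assoc, mul_assoc, this, mul_assoc]
  rw [integral_congr_ae (Filter.Eventually.of_forall key)]
  rw [integral_add_right_eq_self (fun q : ℝ × ℝ =>
      (qexp qi (-(u * q.1)) * F q * qexp qj (-(v * q.2))) * qexp qj (v * h)) ((0, h) : ℝ × ℝ)]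
  have := ((ContinuousLinearMap.mul ℝ ℍ[ℝ]).flip (qexp qj (v * h))).integral_comp_comm
    (integrable_kernel u v F hF)
  simpa [QFT_T, ContinuousLinearMap.flip_apply, ContinuousLinearMap.mul_apply'] using this

lemma key_S (f g : ℝ × ℝ → ℍ[ℝ]) (hf : Integrable f) (hg : Integrable g)
    (hfg : L1PartialDerivS f g) (u v : ℝ) :
    QFT_T g u v = (u • qi) * QFT_T f u v := by
  set Q : ℝ → ℝ × ℝ → ℍ[ℝ] := fun h p => h⁻¹ • (f (p.1 + h, p.2) - f p) with hQ
  have hQint : ∀ h : ℝ, Integrable (Q h) := fun h =>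
    (((integrable_shift_S f hf h).sub hf).smul h⁻¹)
  -- the QFT of the difference quotient
  have hformula : ∀ h : ℝ, QFT_T (Q h) u v
      = (h⁻¹ • (qexp qi (u * h) - 1)) * QFT_T f u v := by
    intro h
    have expand : ∀ p : ℝ × ℝ,
        qexp qi (-(u * p.1)) * Q h p * qexp qj (-(v * p.2))
        = h⁻¹ • (qexp qi (-(u * p.1)) * f (p.1 + h, p.2) * qexp qj (-(v * p.2))
            - qexp qi (-(u * p.1)) * f p * qexp qj (-(v * p.2))) := by
      intro p
      simp only [hQ, mul_smul_comm, smul_mul_assoc, mul_sub, sub_mul]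
    rw [QFT_T, integral_congr_ae (Filter.Eventually.of_forall expand), integral_smul,
      integral_sub (integrable_kernel u v _ (integrable_shift_S f hf h))
        (integrable_kernel u v f hf),
      qft_shift_S f hf u v h]
    rw [smul_mul_assoc, sub_mul, one_mul]
    rfl
  -- convergence to (u • qi) * QFT f
  have h1 : Tendsto (fun h : ℝ => QFT_T (Q h) u v) (𝓝[≠] (0:ℝ))
      (𝓝 ((u • qi) * QFT_T f u v)) := by
    simp_rw [hformula]
    exact (tendsto_qexp_slope qi u).mul tendsto_const_nhds
  -- convergence to QFT g
  have h2 : Tendsto (fun h : ℝ => QFT_T (Q h) u v) (𝓝[≠] (0:ℝ)) (𝓝 (QFT_T g u v)) := by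
    rw [tendsto_iff_norm_sub_tendsto_zero]
    refine squeeze_zero (fun h => norm_nonneg _)
      (fun h => ?_) hfg
    have hsub : QFT_T (Q h) u v - QFT_T g u v = QFT_T (fun p => Q h p - g p) u v := by
      rw [QFT_T, QFT_T, QFT_T, ← integral_sub (integrable_kernel u v _ (hQint h))
        (integrable_kernel u v g hg)]
      congr 1
      funext p
      simp only [mul_sub, sub_mul]
    rw [hsub]
    exact norm_qft_le u v _
  exact tendsto_nhds_unique h2 h1

lemma key_T (f g : ℝ × ℝ → ℍ[ℝ]) (hf : Integrable f) (hg : Integrable g)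
    (hfg : L1PartialDerivT f g) (u v : ℝ) :
    QFT_T g u v = QFT_T f u v * (v • qj) := by
  set Q : ℝ → ℝ × ℝ → ℍ[ℝ] := fun h p => h⁻¹ • (f (p.1, p.2 + h) - f p) with hQ
  have hQint : ∀ h : ℝ, Integrable (Q h) := fun h =>
    (((integrable_shift_T f hf h).sub hf).smul h⁻¹)
  have hformula : ∀ h : ℝ, QFT_T (Q h) u v
      = QFT_T f u v * (h⁻¹ • (qexp qj (v * h) - 1)) := by
    intro h
    have expand : ∀ p : ℝ × ℝ,
        qexp qi (-(u * p.1)) * Q h p * qexp qj (-(v * p.2))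
        = h⁻¹ • (qexp qi (-(u * p.1)) * f (p.1, p.2 + h) * qexp qj (-(v * p.2))
            - qexp qi (-(u * p.1)) * f p * qexp qj (-(v * p.2))) := by
      intro p
      simp only [hQ, mul_smul_comm, smul_mul_assoc, mul_sub, sub_mul]
    rw [QFT_T, integral_congr_ae (Filter.Eventually.of_forall expand), integral_smul,
      integral_sub (integrable_kernel u v _ (integrable_shift_T f hf h))
        (integrable_kernel u v f hf),
      qft_shift_T f hf u v h]
    rw [mul_smul_comm, mul_sub, mul_one]
    rfl
  have h1 : Tendsto (fun h : ℝ => QFT_T (Q h) u v) (𝓝[≠] (0:ℝ))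
      (𝓝 (QFT_T f u v * (v • qj))) := by
    simp_rw [hformula]
    exact tendsto_const_nhds.mul (tendsto_qexp_slope qj v)
  have h2 : Tendsto (fun h : ℝ => QFT_T (Q h) u v) (𝓝[≠] (0:ℝ)) (𝓝 (QFT_T g u v)) := by
    rw [tendsto_iff_norm_sub_tendsto_zero]
    refine squeeze_zero (fun h => norm_nonneg _) (fun h => ?_) hfg
    have hsub : QFT_T (Q h) u v - QFT_T g u v = QFT_T (fun p => Q h p - g p) u v := by
      rw [QFT_T, QFT_T, QFT_T, ← integral_sub (integrable_kernel u v _ (hQint h))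
        (integrable_kernel u v g hg)]
      congr 1
      funext p
      simp only [mul_sub, sub_mul]
    rw [hsub]
    exact norm_qft_le u v _
  exact tendsto_nhds_unique h2 h1

/-- The two-sided QFT of the iterated `L¹`-norm partial derivative
`∂^{m+n} f/(∂s^m ∂t^n)` equals `(iu)^m 𝓕_T(u,v) (jv)^n`. -/
theorem qft_two_sided_iterated_deriv
    (m n : ℕ) (f : ℝ × ℝ → ℍ[ℝ]) (hf : Integrable f)
    (D : ℕ → ℕ → (ℝ × ℝ → ℍ[ℝ])) (hD : HasL1DerivsUpTo (m + n) f D) :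
    ∀ u v : ℝ, QFT_T (D m n) u v = (u • qi) ^ m * QFT_T f u v * (v • qj) ^ n := by
  intro u v
  obtain ⟨h00, hint, hS, hT⟩ := hD
  -- first: QFT (D 0 l) = QFT f * (v • qj)^l for l ≤ n
  have base : ∀ l : ℕ, l ≤ n → QFT_T (D 0 l) u v = QFT_T f u v * (v • qj) ^ l := by
    intro l hl
    induction l with
    | zero => simp [h00]
    | succ l ih =>
      have hl' : l ≤ n := Nat.le_of_succ_le hl
      have step := key_T (D 0 l) (D 0 (l + 1))
        (hint 0 l (by omega)) (hint 0 (l + 1) (by omega))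
        (hT 0 l (by omega)) u v
      rw [step, ih hl', pow_succ, mul_assoc]
  -- then: QFT (D k n) = (u • qi)^k * QFT f * (v • qj)^n for k ≤ m
  have main : ∀ k : ℕ, k ≤ m →
      QFT_T (D k n) u v = (u • qi) ^ k * QFT_T f u v * (v • qj) ^ n := by
    intro k hk
    induction k with
    | zero => simpa using base n le_rfl
    | succ k ih =>
      have hk' : k ≤ m := Nat.le_of_succ_le hk
      have step := key_S (D k n) (D (k + 1) n)
        (hint k n (by omega)) (hint (k + 1) n (by omega))
        (hS k n (by omega)) u v
      rw [step, ih hk']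
      simp only [pow_succ', mul_assoc]
  exact main m le_rfl
end
end
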